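/- arXiv:2504.16797 — 5 statements merged into one kernel-verified Lean document; each statement's English description precedes it below -/
import Mathlib

section
/- Fix f ∈ W and let s ⊆ X be an open set such that for every θ ∈ s there is a two-sided inverse E(θ) : W →L U of D(θ). Define the parameter-to-state map S : s → U by S(θ) := E(θ)f. Then for every θ₀ ∈ s, S is Fréchet differentiable at θ₀ with derivative the continuous linear map h ↦ −E(θ₀)((B(S(θ₀)))h); i.e. S has at θ₀ the Fréchet derivative −E(θ₀) ∘ B(S(θ₀)). -/
open ContinuousLinearMap Filter Asymptotics

/-- Fréchet differentiability of the parameter-to-state map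
`S θ = E θ f`, with derivative `h ↦ -E θ₀ ((B (S θ₀)) h)`. -/
theorem statement0
    {X U W : Type*} [NormedAddCommGroup X] [NormedSpace ℂ X]
    [NormedAddCommGroup U] [NormedSpace ℂ U] [CompleteSpace U]
    [NormedAddCommGroup W] [NormedSpace ℂ W] [CompleteSpace W]
    (K : U →L[ℂ] W) (B : U →L[ℂ] X →L[ℂ] W)
    (D : X → U →L[ℂ] W) (hD : ∀ θ u, D θ u = K u + B u θ)
    (f : W) (s : Set X) (hs : IsOpen s)
    (E : X → W →L[ℂ] U)
    (hE1 : ∀ θ ∈ s, (E θ).comp (D θ) = ContinuousLinearMap.id ℂ U)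
    (hE2 : ∀ θ ∈ s, (D θ).comp (E θ) = ContinuousLinearMap.id ℂ W)
    (S : X → U) (hS : ∀ θ, S θ = E θ f)
    (θ₀ : X) (hθ₀ : θ₀ ∈ s) :
    HasFDerivAt S (-((E θ₀).comp (B (S θ₀)))) θ₀ := by
  have hE1' : ∀ θ ∈ s, ∀ u, E θ (D θ u) = u := by
    intro θ hθ u
    have := congrArg (fun T : U →L[ℂ] U => T u) (hE1 θ hθ)
    simpa using this
  have hE2' : ∀ θ ∈ s, ∀ w, D θ (E θ w) = w := by
    intro θ hθ w
    have := congrArg (fun T : W →L[ℂ] W => T w) (hE2 θ hθ)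
    simpa using this
  -- the equivalences
  let eqv : ∀ θ, θ ∈ s → (U ≃L[ℂ] W) := fun θ hθ =>
    ContinuousLinearEquiv.equivOfInverse (D θ) (E θ) (hE1' θ hθ) (hE2' θ hθ)
  have hEinv : ∀ θ (hθ : θ ∈ s), E θ = ContinuousLinearMap.inverse (D θ) := by
    intro θ hθ
    have h1 : ((eqv θ hθ : U ≃L[ℂ] W) : U →L[ℂ] W) = D θ := rfl
    rw [← h1, ContinuousLinearMap.inverse_equiv]
    rfl
  -- continuity of θ ↦ D θ
  have hDcont : ContinuousAt (fun θ => D θ) θ₀ := by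
    have hfun : (fun θ => D θ) = fun θ => K + B.flip θ := by
      funext θ; ext u; simp [hD θ u]
    rw [hfun]
    exact (continuous_const.add B.flip.continuous).continuousAt
  -- continuity of inverse at D θ₀
  have hinvc : ContinuousAt (fun T : U →L[ℂ] W => ContinuousLinearMap.inverse T) (D θ₀) := by
    have h := (contDiffAt_map_inverse (𝕜 := ℂ) (n := 1) (eqv θ₀ hθ₀)).continuousAt
    exact h
  have hmem : ∀ᶠ θ in nhds θ₀, θ ∈ s := hs.eventually_mem hθ₀
  have hEcont : ContinuousAt E θ₀ := by
    have h : ContinuousAt (fun θ => ContinuousLinearMap.inverse (D θ)) θ₀ := hinvc.comp hDcont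
    apply h.congr
    filter_upwards [hmem] with θ hθ
    exact (hEinv θ hθ).symm
  -- key algebraic identity
  have hkey : ∀ θ ∈ s,
      S θ - S θ₀ - (-((E θ₀).comp (B (S θ₀)))) (θ - θ₀)
        = (E θ₀ - E θ) (B (S θ₀) (θ - θ₀)) := by
    intro θ hθ
    have h1 : D θ₀ (S θ₀) = f := by rw [hS]; exact hE2' θ₀ hθ₀ f
    have h4 : D θ (S θ₀) - D θ₀ (S θ₀) = B (S θ₀) (θ - θ₀) := by
      rw [hD, hD]; simp [map_sub]
    have h5 : S θ = S θ₀ - E θ (B (S θ₀) (θ - θ₀)) := by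
      calc S θ = E θ (D θ₀ (S θ₀)) := by rw [hS θ, h1]
        _ = E θ (D θ (S θ₀) - (D θ (S θ₀) - D θ₀ (S θ₀))) := by
              congr 1; abel
        _ = S θ₀ - E θ (B (S θ₀) (θ - θ₀)) := by
              rw [map_sub, hE1' θ hθ, h4]
    rw [h5]
    simp only [neg_apply, coe_comp', Function.comp_apply, sub_apply]
    abel
  -- tendsto of operator norm difference
  have hto : Tendsto (fun θ => ‖E θ₀ - E θ‖) (nhds θ₀) (nhds 0) := by
    have h : Tendsto (fun θ => E θ₀ - E θ) (nhds θ₀) (nhds (E θ₀ - E θ₀)) :=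
      (continuousAt_const.sub hEcont)
    simpa using h.norm
  rw [hasFDerivAt_iff_isLittleO, Asymptotics.isLittleO_iff]
  intro c hc
  have hb : (0:ℝ) < ‖B (S θ₀)‖ + 1 := by positivity
  have hsmall : ∀ᶠ θ in nhds θ₀, ‖E θ₀ - E θ‖ < c / (‖B (S θ₀)‖ + 1) :=
    hto.eventually_lt_const (by positivity)
  filter_upwards [hmem, hsmall] with θ hθ hsm
  rw [hkey θ hθ]
  calc ‖(E θ₀ - E θ) (B (S θ₀) (θ - θ₀))‖
      ≤ ‖E θ₀ - E θ‖ * ‖B (S θ₀) (θ - θ₀)‖ := le_opNorm _ _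
    _ ≤ ‖E θ₀ - E θ‖ * (‖B (S θ₀)‖ * ‖θ - θ₀‖) := by
        gcongr; exact le_opNorm _ _
    _ ≤ (c / (‖B (S θ₀)‖ + 1)) * ((‖B (S θ₀)‖ + 1) * ‖θ - θ₀‖) := by
        exact mul_le_mul hsm.le (by gcongr; linarith) (by positivity) (by positivity)
    _ = c * ‖θ - θ₀‖ := by field_simp
end

section
/- Let ι : U →L L²(μ, ℂ) be a continuous linear map, let s ⊆ X be an open set such that for every θ ∈ s there is a two-sided inverse E(θ) : W →L U of D(θ), let f₁, …, f_J ∈ W (J ≥ 1), and set u_j(θ) := E(θ) f_j. Fix θ₀ ∈ s, write u_j := u_j(θ₀), and for h ∈ X set φ_j(h) := −E(θ₀)((B u_j)h). Define the covariance kernel K(θ) := (1/J) Σ_{j=1}^{J} (ι u_j(θ)) ⊗ conj(ι u_j(θ)) and the linearization kernel T(h) := (1/J) Σ_{j=1}^{J} [ (ι u_j) ⊗ conj(ι φ_j(h)) + (ι φ_j(h)) ⊗ conj(ι u_j) ]. Then the parameter-to-covariance map is Fréchet differentiable at θ₀ in the little-o sense: ‖K(θ₀ + h) − K(θ₀) −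 T(h)‖_{L²(μ×μ)} / ‖h‖_X tends to 0 as h → 0, h ≠ 0. -/
open MeasureTheory ComplexConjugate
open scoped ENNReal

namespace Statement10Aux

variable {Ω : Type*} [MeasurableSpace Ω] {μ : Measure Ω} [SigmaFinite μ]

lemma ae_fst {g g' : Ω → ℂ} (h : g =ᵐ[μ] g') :
    (fun p : Ω × Ω => g p.1) =ᵐ[μ.prod μ] fun p => g' p.1 :=
  Measure.quasiMeasurePreserving_fst.ae_eq_comp h

lemma ae_snd {g g' : Ω → ℂ} (h : g =ᵐ[μ] g') :
    (fun p : Ω × Ω => g p.2) =ᵐ[μ.prod μ] fun p => g' p.2 :=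
  Measure.quasiMeasurePreserving_snd.ae_eq_comp h

lemma tensor_aesm (x y : Lp ℂ 2 μ) :
    AEStronglyMeasurable (fun p : Ω × Ω => x p.1 * conj (y p.2)) (μ.prod μ) := by
  have h1 : AEStronglyMeasurable (fun p : Ω × Ω => (x : Ω → ℂ) p.1) (μ.prod μ) :=
    (Lp.aestronglyMeasurable x).comp_quasiMeasurePreserving
      Measure.quasiMeasurePreserving_fst
  have h2 : AEStronglyMeasurable (fun p : Ω × Ω => conj ((y : Ω → ℂ) p.2)) (μ.prod μ) := by
    have := ((Lp.aestronglyMeasurable y).comp_quasiMeasurePreserving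
      (Measure.quasiMeasurePreserving_snd (μ := μ) (ν := μ)))
    exact (RCLike.continuous_conj (K := ℂ)).comp_aestronglyMeasurable this
  exact h1.mul h2

lemma tensor_eLpNorm_aux {f g : Ω → ℂ} (hf : AEStronglyMeasurable f μ)
    (hg : AEStronglyMeasurable g μ) :
    eLpNorm (fun p : Ω × Ω => f p.1 * g p.2) 2 (μ.prod μ)
      = eLpNorm f 2 μ * eLpNorm g 2 μ := by
  rw [eLpNorm_eq_lintegral_rpow_enorm_toReal two_ne_zero ENNReal.ofNat_ne_top,
      eLpNorm_eq_lintegral_rpow_enorm_toReal two_ne_zero ENNReal.ofNat_ne_top,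
      eLpNorm_eq_lintegral_rpow_enorm_toReal two_ne_zero ENNReal.ofNat_ne_top]
  have h2 : ((2 : ℝ≥0∞).toReal) = ((2 : ℕ) : ℝ) := by norm_num
  simp only [h2, ENNReal.rpow_natCast]
  have hpt : ∀ p : Ω × Ω, (‖f p.1 * g p.2‖ₑ) ^ (2 : ℕ)
      = (‖f p.1‖ₑ) ^ (2 : ℕ) * (‖g p.2‖ₑ) ^ (2 : ℕ) := by
    intro p
    rw [enorm_mul, mul_pow]
  simp only [hpt]
  rw [lintegral_prod_mul (hf.enorm.pow_const 2) (hg.enorm.pow_const 2)]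
  exact ENNReal.mul_rpow_of_nonneg _ _ (by norm_num)

lemma tensor_eLpNorm (x y : Lp ℂ 2 μ) :
    eLpNorm (fun p : Ω × Ω => x p.1 * conj (y p.2)) 2 (μ.prod μ)
      = (‖x‖₊ : ℝ≥0∞) * ‖y‖₊ := by
  rw [tensor_eLpNorm_aux (Lp.aestronglyMeasurable x)
    ((RCLike.continuous_conj (K := ℂ)).comp_aestronglyMeasurable (Lp.aestronglyMeasurable y))]
  have : eLpNorm (fun ω => conj ((y : Ω → ℂ) ω)) 2 μ = eLpNorm (y : Ω → ℂ) 2 μ := by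
    apply eLpNorm_congr_norm_ae
    filter_upwards with ω using by simp
  rw [this, ← enorm_eq_nnnorm, ← enorm_eq_nnnorm, Lp.enorm_def, Lp.enorm_def]

lemma tensor_eLpNorm_le (x y : Lp ℂ 2 μ) {a b : ℝ} (hx : ‖x‖ ≤ a) (hy : ‖y‖ ≤ b) :
    eLpNorm (fun p : Ω × Ω => x p.1 * conj (y p.2)) 2 (μ.prod μ)
      ≤ ENNReal.ofReal (a * b) := by
  rw [tensor_eLpNorm]
  have hx' : (‖x‖₊ : ℝ≥0∞) ≤ ENNReal.ofReal a := by
    rw [← enorm_eq_nnnorm, ← ofReal_norm]; exact ENNReal.ofReal_le_ofReal hx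
  have hy' : (‖y‖₊ : ℝ≥0∞) ≤ ENNReal.ofReal b := by
    rw [← enorm_eq_nnnorm, ← ofReal_norm]; exact ENNReal.ofReal_le_ofReal hy
  calc (‖x‖₊ : ℝ≥0∞) * ‖y‖₊ ≤ ENNReal.ofReal a * ENNReal.ofReal b :=
        mul_le_mul' hx' hy'
    _ = ENNReal.ofReal (a * b) := (ENNReal.ofReal_mul ((norm_nonneg x).trans hx)).symm

end Statement10Aux

open Statement10Aux

set_option maxHeartbeats 1600000 in
/-- Fréchet differentiability (in the little-o sense, with the
`L²(μ × μ)` kernel norm) of the parameter-to-covariance map at `θ₀`. -/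
theorem statement10
    {Ω : Type*} [MeasurableSpace Ω] (μ : Measure Ω) [SigmaFinite μ]
    {X U W : Type*} [NormedAddCommGroup X] [NormedSpace ℂ X]
    [NormedAddCommGroup U] [NormedSpace ℂ U] [CompleteSpace U]
    [NormedAddCommGroup W] [NormedSpace ℂ W] [CompleteSpace W]
    (K : U →L[ℂ] W) (B : U →L[ℂ] X →L[ℂ] W)
    (D : X → U →L[ℂ] W) (hD : ∀ θ u, D θ u = K u + B u θ)
    (ι : U →L[ℂ] Lp ℂ 2 μ)
    (s : Set X) (hs : IsOpen s)
    (E : X → W →L[ℂ] U)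
    (hE1 : ∀ θ ∈ s, (E θ).comp (D θ) = ContinuousLinearMap.id ℂ U)
    (hE2 : ∀ θ ∈ s, (D θ).comp (E θ) = ContinuousLinearMap.id ℂ W)
    (J : ℕ) (hJ : 1 ≤ J) (f : Fin J → W)
    (u : X → Fin J → U) (hu : ∀ θ j, u θ j = E θ (f j))
    (θ₀ : X) (hθ₀ : θ₀ ∈ s)
    (φ : X → Fin J → U) (hφ : ∀ h j, φ h j = -(E θ₀ ((B (u θ₀ j)) h)))
    (Kker : X → Ω × Ω → ℂ)
    (hK : ∀ θ p, Kker θ p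
        = (1 / (J : ℂ)) * ∑ j, ι (u θ j) p.1 * conj (ι (u θ j) p.2))
    (Tker : X → Ω × Ω → ℂ)
    (hT : ∀ h p, Tker h p = (1 / (J : ℂ)) * ∑ j,
        (ι (u θ₀ j) p.1 * conj (ι (φ h j) p.2)
          + ι (φ h j) p.1 * conj (ι (u θ₀ j) p.2))) :
    Filter.Tendsto
      (fun h : X =>
        (eLpNorm (fun p : Ω × Ω => Kker (θ₀ + h) p - Kker θ₀ p - Tker h p)
            2 (μ.prod μ)).toReal / ‖h‖)
      (nhdsWithin 0 {0}ᶜ) (nhds 0) := by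
  classical
  set c₀ : ℝ := ‖E θ₀‖ with hc₀def
  set cB : ℝ := ‖B‖ with hcBdef
  set cι : ℝ := ‖ι‖ with hcιdef
  set m : Fin J → ℝ := fun j => ‖u θ₀ j‖ with hmdef
  have hc₀ : 0 ≤ c₀ := by rw [hc₀def]; exact norm_nonneg _
  have hcB : 0 ≤ cB := by rw [hcBdef]; exact norm_nonneg B
  have hcι : 0 ≤ cι := by rw [hcιdef]; exact norm_nonneg _
  have hm : ∀ j, 0 ≤ m j := fun j => by simp only [hmdef]; exact norm_nonneg _
  obtain ⟨ε, hε, hball⟩ := Metric.isOpen_iff.mp hs θ₀ hθ₀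
  set δ : ℝ := min ε (1 / (2 * (cB * c₀ + 1))) with hδdef
  have hδpos : 0 < δ := lt_min hε (by positivity)
  have hmem : ∀ h : X, ‖h‖ < δ → θ₀ + h ∈ s := by
    intro h hh
    apply hball
    rw [Metric.mem_ball, dist_eq_norm]
    have : θ₀ + h - θ₀ = h := by abel
    rw [this]
    exact hh.trans_le (min_le_left _ _)
  have hq : ∀ h : X, ‖h‖ < δ → cB * c₀ * ‖h‖ ≤ 1 / 2 := by
    intro h hh
    have h1 : ‖h‖ ≤ 1 / (2 * (cB * c₀ + 1)) := (hh.trans_le (min_le_right _ _)).le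
    have h2 : ‖h‖ * (2 * (cB * c₀ + 1)) ≤ 1 := by
      rw [← le_div_iff₀ (by positivity)]
      exact h1
    nlinarith [norm_nonneg h, mul_nonneg (mul_nonneg hcB hc₀) (norm_nonneg h)]
  -- key operator identity
  have key : ∀ h : X, θ₀ + h ∈ s → ∀ w : W,
      E (θ₀ + h) w = E θ₀ w - E (θ₀ + h) (B (E θ₀ w) h) := by
    intro h hmem' w
    have h1 := DFunLike.congr_fun (hE1 (θ₀ + h) hmem') (E θ₀ w)
    have h2 := DFunLike.congr_fun (hE2 θ₀ hθ₀) w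
    simp only [ContinuousLinearMap.coe_comp', Function.comp_apply,
      ContinuousLinearMap.coe_id', id_eq] at h1 h2
    have h3 : D (θ₀ + h) (E θ₀ w) = w + B (E θ₀ w) h := by
      rw [hD (θ₀ + h), map_add (B (E θ₀ w)), ← add_assoc, ← hD θ₀, h2]
    rw [h3, map_add] at h1
    rw [eq_sub_iff_add_eq, h1]
  have hEbound : ∀ h : X, ‖h‖ < δ → ‖E (θ₀ + h)‖ ≤ 2 * c₀ := by
    intro h hh
    have hm' := hmem h hh
    have hq' := hq h hh
    have hop : ‖E (θ₀ + h)‖ ≤ c₀ + ‖E (θ₀ + h)‖ * (cB * c₀ * ‖h‖) := by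
      apply ContinuousLinearMap.opNorm_le_bound _ (by positivity)
      intro w
      rw [key h hm' w]
      have b1 : ‖E θ₀ w‖ ≤ c₀ * ‖w‖ := (E θ₀).le_opNorm w
      have b2 : ‖E (θ₀ + h) (B (E θ₀ w) h)‖ ≤ ‖E (θ₀ + h)‖ * (cB * c₀ * ‖h‖) * ‖w‖ := by
        calc ‖E (θ₀ + h) (B (E θ₀ w) h)‖
            ≤ ‖E (θ₀ + h)‖ * ‖B (E θ₀ w) h‖ := (E (θ₀ + h)).le_opNorm _
          _ ≤ ‖E (θ₀ + h)‖ * (‖B (E θ₀ w)‖ * ‖h‖) := by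
              gcongr; exact (B (E θ₀ w)).le_opNorm h
          _ ≤ ‖E (θ₀ + h)‖ * ((cB * ‖E θ₀ w‖) * ‖h‖) := by
              gcongr; exact B.le_opNorm _
          _ ≤ ‖E (θ₀ + h)‖ * ((cB * (c₀ * ‖w‖)) * ‖h‖) := by gcongr
          _ = ‖E (θ₀ + h)‖ * (cB * c₀ * ‖h‖) * ‖w‖ := by ring
      calc ‖E θ₀ w - E (θ₀ + h) (B (E θ₀ w) h)‖
          ≤ ‖E θ₀ w‖ + ‖E (θ₀ + h) (B (E θ₀ w) h)‖ := norm_sub_le _ _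
        _ ≤ c₀ * ‖w‖ + ‖E (θ₀ + h)‖ * (cB * c₀ * ‖h‖) * ‖w‖ := add_le_add b1 b2
        _ = (c₀ + ‖E (θ₀ + h)‖ * (cB * c₀ * ‖h‖)) * ‖w‖ := by ring
    nlinarith [norm_nonneg (E (θ₀ + h))]
  -- the constant
  set Cf : Fin J → ℝ := fun j =>
    (cι * (2 * c₀ * cB * m j)) ^ 2
      + 2 * ((cι * m j) * (cι * (2 * c₀ ^ 2 * cB ^ 2 * m j))) with hCfdef
  have hCf : ∀ j, 0 ≤ Cf j := fun j => by
    simp only [hCfdef]; positivity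
  set Creal : ℝ := ∑ j, Cf j with hCdef
  have hCreal : 0 ≤ Creal := Finset.sum_nonneg fun j _ => hCf j
  -- main estimate
  have main : ∀ h : X, ‖h‖ < δ →
      eLpNorm (fun p : Ω × Ω => Kker (θ₀ + h) p - Kker θ₀ p - Tker h p)
        2 (μ.prod μ) ≤ ENNReal.ofReal (Creal * ‖h‖ ^ 2) := by
    intro h hh
    have hm' := hmem h hh
    have hE' := hEbound h hh
    set d : Fin J → U := fun j => -(E (θ₀ + h) (B (u θ₀ j) h)) with hddef
    set r : Fin J → U := fun j => d j - φ h j with hrdef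
    have hud : ∀ j, u (θ₀ + h) j = u θ₀ j + d j := by
      intro j
      show u (θ₀ + h) j = u θ₀ j + -(E (θ₀ + h) (B (u θ₀ j) h))
      rw [hu (θ₀ + h) j, hu θ₀ j, key h hm' (f j), sub_eq_add_neg]
    have hφdr : ∀ j, φ h j = d j - r j := by
      intro j
      show φ h j = d j - (d j - φ h j)
      abel
    have hrval : ∀ j, r j = E (θ₀ + h) (B (E θ₀ (B (u θ₀ j) h)) h) := by
      intro j
      show -(E (θ₀ + h) (B (u θ₀ j) h)) - φ h j = _
      rw [hφ h j, key h hm' (B (u θ₀ j) h)]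
      abel
    -- norm bounds
    have hdb : ∀ j, ‖d j‖ ≤ 2 * c₀ * cB * m j * ‖h‖ := by
      intro j
      show ‖-(E (θ₀ + h) (B (u θ₀ j) h))‖ ≤ _
      rw [norm_neg]
      calc ‖E (θ₀ + h) (B (u θ₀ j) h)‖
          ≤ ‖E (θ₀ + h)‖ * ‖B (u θ₀ j) h‖ := (E (θ₀ + h)).le_opNorm _
        _ ≤ (2 * c₀) * (cB * m j * ‖h‖) := by
            apply mul_le_mul hE' _ (norm_nonneg _) (by positivity)
            calc ‖B (u θ₀ j) h‖ ≤ ‖B (u θ₀ j)‖ * ‖h‖ := (B (u θ₀ j)).le_opNorm h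
              _ ≤ (cB * m j) * ‖h‖ := by gcongr; exact B.le_opNorm _
        _ = 2 * c₀ * cB * m j * ‖h‖ := by ring
    have hrb : ∀ j, ‖r j‖ ≤ 2 * c₀ ^ 2 * cB ^ 2 * m j * ‖h‖ ^ 2 := by
      intro j
      rw [hrval j]
      have hz : ‖B (u θ₀ j) h‖ ≤ cB * m j * ‖h‖ := by
        calc ‖B (u θ₀ j) h‖ ≤ ‖B (u θ₀ j)‖ * ‖h‖ := (B (u θ₀ j)).le_opNorm h
          _ ≤ (cB * m j) * ‖h‖ := by gcongr; exact B.le_opNorm _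
      have hz2 : ‖E θ₀ (B (u θ₀ j) h)‖ ≤ c₀ * (cB * m j * ‖h‖) := by
        calc ‖E θ₀ (B (u θ₀ j) h)‖ ≤ c₀ * ‖B (u θ₀ j) h‖ := (E θ₀).le_opNorm _
          _ ≤ c₀ * (cB * m j * ‖h‖) := by gcongr
      calc ‖E (θ₀ + h) (B (E θ₀ (B (u θ₀ j) h)) h)‖
          ≤ ‖E (θ₀ + h)‖ * ‖B (E θ₀ (B (u θ₀ j) h)) h‖ := (E (θ₀ + h)).le_opNorm _
        _ ≤ (2 * c₀) * ((cB * (c₀ * (cB * m j * ‖h‖))) * ‖h‖) := by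
            apply mul_le_mul hE' _ (norm_nonneg _) (by positivity)
            calc ‖B (E θ₀ (B (u θ₀ j) h)) h‖
                ≤ ‖B (E θ₀ (B (u θ₀ j) h))‖ * ‖h‖ :=
                  (B (E θ₀ (B (u θ₀ j) h))).le_opNorm h
              _ ≤ (cB * ‖E θ₀ (B (u θ₀ j) h)‖) * ‖h‖ := by gcongr; exact B.le_opNorm _
              _ ≤ (cB * (c₀ * (cB * m j * ‖h‖))) * ‖h‖ := by gcongr
        _ = 2 * c₀ ^ 2 * cB ^ 2 * m j * ‖h‖ ^ 2 := by ring
    -- a.e. kernel identity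
    have hae : (fun p : Ω × Ω => Kker (θ₀ + h) p - Kker θ₀ p - Tker h p)
        =ᵐ[μ.prod μ] fun p => (1 / (J : ℂ)) * ∑ j,
          (ι (d j) p.1 * conj (ι (d j) p.2)
            + ι (u θ₀ j) p.1 * conj (ι (r j) p.2)
            + ι (r j) p.1 * conj (ι (u θ₀ j) p.2)) := by
      have hcoe : ∀ j : Fin J, ∀ᵐ p ∂(μ.prod μ),
          (ι (u (θ₀ + h) j)) p.1 = ι (u θ₀ j) p.1 + ι (d j) p.1
          ∧ (ι (u (θ₀ + h) j)) p.2 = ι (u θ₀ j) p.2 + ι (d j) p.2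
          ∧ (ι (φ h j)) p.1 = ι (d j) p.1 - ι (r j) p.1
          ∧ (ι (φ h j)) p.2 = ι (d j) p.2 - ι (r j) p.2 := by
        intro j
        have e1 : ⇑(ι (u (θ₀ + h) j)) =ᵐ[μ] fun ω => ι (u θ₀ j) ω + ι (d j) ω := by
          rw [hud j, map_add]
          filter_upwards [Lp.coeFn_add (ι (u θ₀ j)) (ι (d j))] with ω hω using hω
        have e2 : ⇑(ι (φ h j)) =ᵐ[μ] fun ω => ι (d j) ω - ι (r j) ω := by
          rw [hφdr j, map_sub]
          filter_upwards [Lp.coeFn_sub (ι (d j)) (ι (r j))] with ω hω using hω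
        filter_upwards [ae_fst e1, ae_snd e1, ae_fst e2, ae_snd e2] with p h1 h2 h3 h4
        exact ⟨h1, h2, h3, h4⟩
      have hall : ∀ᵐ p ∂(μ.prod μ), ∀ j : Fin J,
          (ι (u (θ₀ + h) j)) p.1 = ι (u θ₀ j) p.1 + ι (d j) p.1
          ∧ (ι (u (θ₀ + h) j)) p.2 = ι (u θ₀ j) p.2 + ι (d j) p.2
          ∧ (ι (φ h j)) p.1 = ι (d j) p.1 - ι (r j) p.1
          ∧ (ι (φ h j)) p.2 = ι (d j) p.2 - ι (r j) p.2 := ae_all_iff.mpr hcoe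
      filter_upwards [hall] with p hp
      rw [hK, hK, hT, ← mul_sub, ← mul_sub]
      congr 1
      rw [← Finset.sum_sub_distrib, ← Finset.sum_sub_distrib]
      apply Finset.sum_congr rfl
      intro j _
      obtain ⟨h1, h2, h3, h4⟩ := hp j
      rw [h1, h2, h3, h4, map_add, map_sub]
      ring
    rw [eLpNorm_congr_ae hae]
    -- bound each summand
    have hGj : ∀ j : Fin J, eLpNorm (fun p : Ω × Ω =>
        ι (d j) p.1 * conj (ι (d j) p.2)
          + ι (u θ₀ j) p.1 * conj (ι (r j) p.2)
          + ι (r j) p.1 * conj (ι (u θ₀ j) p.2)) 2 (μ.prod μ)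
        ≤ ENNReal.ofReal (Cf j * ‖h‖ ^ 2) := by
      intro j
      have bd : ‖ι (d j)‖ ≤ cι * (2 * c₀ * cB * m j * ‖h‖) := by
        calc ‖ι (d j)‖ ≤ cι * ‖d j‖ := ι.le_opNorm _
          _ ≤ cι * (2 * c₀ * cB * m j * ‖h‖) := by gcongr; exact hdb j
      have br : ‖ι (r j)‖ ≤ cι * (2 * c₀ ^ 2 * cB ^ 2 * m j * ‖h‖ ^ 2) := by
        calc ‖ι (r j)‖ ≤ cι * ‖r j‖ := ι.le_opNorm _
          _ ≤ cι * (2 * c₀ ^ 2 * cB ^ 2 * m j * ‖h‖ ^ 2) := by gcongr; exact hrb j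
      have bu : ‖ι (u θ₀ j)‖ ≤ cι * m j := ι.le_opNorm _
      have e1 := tensor_eLpNorm_le (ι (d j)) (ι (d j)) bd bd
      have e2 := tensor_eLpNorm_le (ι (u θ₀ j)) (ι (r j)) bu br
      have e3 := tensor_eLpNorm_le (ι (r j)) (ι (u θ₀ j)) br bu
      have hsplit : (fun p : Ω × Ω =>
          ι (d j) p.1 * conj (ι (d j) p.2)
            + ι (u θ₀ j) p.1 * conj (ι (r j) p.2)
            + ι (r j) p.1 * conj (ι (u θ₀ j) p.2))
          = (fun p : Ω × Ω => ι (d j) p.1 * conj (ι (d j) p.2))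
            + ((fun p : Ω × Ω => ι (u θ₀ j) p.1 * conj (ι (r j) p.2))
              + fun p : Ω × Ω => ι (r j) p.1 * conj (ι (u θ₀ j) p.2)) := by
        funext p
        simp only [Pi.add_apply]
        ring
      rw [hsplit]
      calc eLpNorm _ 2 (μ.prod μ)
          ≤ eLpNorm (fun p : Ω × Ω => ι (d j) p.1 * conj (ι (d j) p.2)) 2 (μ.prod μ)
            + eLpNorm ((fun p : Ω × Ω => ι (u θ₀ j) p.1 * conj (ι (r j) p.2))
              + fun p : Ω × Ω => ι (r j) p.1 * conj (ι (u θ₀ j) p.2)) 2 (μ.prod μ) :=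
            eLpNorm_add_le (tensor_aesm _ _) ((tensor_aesm _ _).add (tensor_aesm _ _))
              one_le_two
        _ ≤ eLpNorm (fun p : Ω × Ω => ι (d j) p.1 * conj (ι (d j) p.2)) 2 (μ.prod μ)
            + (eLpNorm (fun p : Ω × Ω => ι (u θ₀ j) p.1 * conj (ι (r j) p.2)) 2 (μ.prod μ)
              + eLpNorm (fun p : Ω × Ω => ι (r j) p.1 * conj (ι (u θ₀ j) p.2)) 2 (μ.prod μ)) := by
            gcongr
            exact eLpNorm_add_le (tensor_aesm _ _) (tensor_aesm _ _) one_le_two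
        _ ≤ ENNReal.ofReal ((cι * (2 * c₀ * cB * m j * ‖h‖)) * (cι * (2 * c₀ * cB * m j * ‖h‖)))
            + (ENNReal.ofReal ((cι * m j) * (cι * (2 * c₀ ^ 2 * cB ^ 2 * m j * ‖h‖ ^ 2)))
              + ENNReal.ofReal ((cι * (2 * c₀ ^ 2 * cB ^ 2 * m j * ‖h‖ ^ 2)) * (cι * m j))) := by
            gcongr
        _ = ENNReal.ofReal ((cι * (2 * c₀ * cB * m j * ‖h‖)) * (cι * (2 * c₀ * cB * m j * ‖h‖))
            + ((cι * m j) * (cι * (2 * c₀ ^ 2 * cB ^ 2 * m j * ‖h‖ ^ 2))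
              + (cι * (2 * c₀ ^ 2 * cB ^ 2 * m j * ‖h‖ ^ 2)) * (cι * m j))) := by
            rw [← ENNReal.ofReal_add (by positivity) (by positivity),
              ← ENNReal.ofReal_add (by positivity) (by positivity)]
        _ ≤ ENNReal.ofReal (Cf j * ‖h‖ ^ 2) := by
            apply ENNReal.ofReal_le_ofReal
            apply le_of_eq
            simp only [hCfdef]
            ring
    -- assemble
    have hfactor : (fun p : Ω × Ω => (1 / (J : ℂ)) * ∑ j,
        (ι (d j) p.1 * conj (ι (d j) p.2)
          + ι (u θ₀ j) p.1 * conj (ι (r j) p.2)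
          + ι (r j) p.1 * conj (ι (u θ₀ j) p.2)))
        = (1 / (J : ℂ)) • ∑ j : Fin J, (fun p : Ω × Ω =>
            ι (d j) p.1 * conj (ι (d j) p.2)
              + ι (u θ₀ j) p.1 * conj (ι (r j) p.2)
              + ι (r j) p.1 * conj (ι (u θ₀ j) p.2)) := by
      funext p
      simp [Finset.sum_apply, smul_eq_mul]
    rw [hfactor]
    have hnn : (‖(1 / (J : ℂ))‖₊ : ℝ≥0∞) ≤ 1 := by
      rw [← enorm_eq_nnnorm, ← ofReal_norm]
      have : ‖(1 / (J : ℂ))‖ ≤ 1 := by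
        rw [norm_div, norm_one, Complex.norm_natCast]
        rw [div_le_one (by exact_mod_cast Nat.lt_of_lt_of_le Nat.zero_lt_one hJ)]
        exact_mod_cast hJ
      calc ENNReal.ofReal ‖(1 / (J : ℂ))‖ ≤ ENNReal.ofReal 1 := ENNReal.ofReal_le_ofReal this
        _ = 1 := ENNReal.ofReal_one
    calc eLpNorm ((1 / (J : ℂ)) • ∑ j : Fin J, (fun p : Ω × Ω =>
            ι (d j) p.1 * conj (ι (d j) p.2)
              + ι (u θ₀ j) p.1 * conj (ι (r j) p.2)
              + ι (r j) p.1 * conj (ι (u θ₀ j) p.2))) 2 (μ.prod μ)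
        ≤ ‖(1 / (J : ℂ))‖₊ • eLpNorm (∑ j : Fin J, (fun p : Ω × Ω =>
            ι (d j) p.1 * conj (ι (d j) p.2)
              + ι (u θ₀ j) p.1 * conj (ι (r j) p.2)
              + ι (r j) p.1 * conj (ι (u θ₀ j) p.2))) 2 (μ.prod μ) := eLpNorm_const_smul_le
      _ = (‖(1 / (J : ℂ))‖₊ : ℝ≥0∞) * eLpNorm (∑ j : Fin J, (fun p : Ω × Ω =>
            ι (d j) p.1 * conj (ι (d j) p.2)
              + ι (u θ₀ j) p.1 * conj (ι (r j) p.2)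
              + ι (r j) p.1 * conj (ι (u θ₀ j) p.2))) 2 (μ.prod μ) := rfl
      _ ≤ 1 * eLpNorm (∑ j : Fin J, (fun p : Ω × Ω =>
            ι (d j) p.1 * conj (ι (d j) p.2)
              + ι (u θ₀ j) p.1 * conj (ι (r j) p.2)
              + ι (r j) p.1 * conj (ι (u θ₀ j) p.2))) 2 (μ.prod μ) := by gcongr
      _ = eLpNorm (∑ j : Fin J, (fun p : Ω × Ω =>
            ι (d j) p.1 * conj (ι (d j) p.2)
              + ι (u θ₀ j) p.1 * conj (ι (r j) p.2)
              + ι (r j) p.1 * conj (ι (u θ₀ j) p.2))) 2 (μ.prod μ) := one_mul _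
      _ ≤ ∑ j : Fin J, eLpNorm (fun p : Ω × Ω =>
            ι (d j) p.1 * conj (ι (d j) p.2)
              + ι (u θ₀ j) p.1 * conj (ι (r j) p.2)
              + ι (r j) p.1 * conj (ι (u θ₀ j) p.2)) 2 (μ.prod μ) :=
          eLpNorm_sum_le (fun j _ =>
            ((tensor_aesm _ _).add (tensor_aesm _ _)).add (tensor_aesm _ _)) one_le_two
      _ ≤ ∑ j : Fin J, ENNReal.ofReal (Cf j * ‖h‖ ^ 2) :=
          Finset.sum_le_sum fun j _ => hGj j
      _ = ENNReal.ofReal (∑ j : Fin J, Cf j * ‖h‖ ^ 2) :=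
          (ENNReal.ofReal_sum_of_nonneg fun j _ => by positivity).symm
      _ = ENNReal.ofReal (Creal * ‖h‖ ^ 2) := by
          rw [hCdef, Finset.sum_mul]
  -- conclude via squeeze
  have hB : Filter.Tendsto (fun h : X => Creal * ‖h‖) (nhdsWithin 0 {0}ᶜ) (nhds 0) := by
    have : Filter.Tendsto (fun h : X => Creal * ‖h‖) (nhds 0) (nhds (Creal * ‖(0 : X)‖)) :=
      (tendsto_const_nhds.mul (continuous_norm.tendsto (0 : X)))
    simpa using this.mono_left nhdsWithin_le_nhds
  apply tendsto_of_tendsto_of_tendsto_of_le_of_le' tendsto_const_nhds hB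
  · filter_upwards with h
    positivity
  · have hδev : ∀ᶠ h : X in nhdsWithin 0 {0}ᶜ, ‖h‖ < δ := by
      apply Filter.Eventually.filter_mono nhdsWithin_le_nhds
      filter_upwards [Metric.ball_mem_nhds (0 : X) hδpos] with x hx
      simpa [dist_zero_right] using hx
    filter_upwards [hδev, self_mem_nhdsWithin] with h hh hne
    have hne' : h ≠ 0 := hne
    have hpos : 0 < ‖h‖ := norm_pos_iff.mpr hne'
    rw [div_le_iff₀ hpos]
    have : (eLpNorm (fun p : Ω × Ω => Kker (θ₀ + h) p - Kker θ₀ p - Tker h p)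
        2 (μ.prod μ)).toReal ≤ Creal * ‖h‖ ^ 2 :=
      ENNReal.toReal_le_of_le_ofReal (by positivity) (main h hh)
    calc (eLpNorm (fun p : Ω × Ω => Kker (θ₀ + h) p - Kker θ₀ p - Tker h p)
        2 (μ.prod μ)).toReal ≤ Creal * ‖h‖ ^ 2 := this
      _ = Creal * ‖h‖ * ‖h‖ := by ring
end

section
/- Let U be a complex Banach space, let ι : U →L L²(μ, ℂ) be a compact operator, let R > 0 and J ≥ 1. Then the set of all kernels (1/J) Σ_{j=1}^{J} (ι w_j) ⊗ conj(ι w_j), viewed as elements of L²(μ × μ, ℂ), where (w₁, …, w_J) ranges over all families in U with ‖w_j‖_U ≤ R for every j, is totally bounded in L²(μ × μ, ℂ). (Hence the parameter-to-covariance forward map of passive imaging maps bounded parameter sets to relatively compact sets and the inverse problem is ill-posed.) -/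
open MeasureTheory ComplexConjugate
open scoped ENNReal NNReal

section kerAux
variable {Ω : Type*} [MeasurableSpace Ω] {μ : Measure Ω} [SigmaFinite μ]

lemma ae_fst' {P : Ω → Prop} (h : ∀ᵐ x ∂μ, P x) : ∀ᵐ p ∂(μ.prod μ), P p.1 :=
  Measure.quasiMeasurePreserving_fst.ae h

lemma ae_snd' {P : Ω → Prop} (h : ∀ᵐ x ∂μ, P x) : ∀ᵐ p ∂(μ.prod μ), P p.2 :=
  Measure.quasiMeasurePreserving_snd.ae h

omit [SigmaFinite μ] in
lemma coeFn_sum' {ι : Type*} (s : Finset ι) (h : ι → Lp ℂ 2 (μ.prod μ)) :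
    ⇑(∑ j ∈ s, h j) =ᵐ[μ.prod μ] fun p => ∑ j ∈ s, h j p := by
  classical
  induction s using Finset.induction_on with
  | empty =>
    simp only [Finset.sum_empty]
    exact Lp.coeFn_zero (E := ℂ) (p := 2) (μ := μ.prod μ)
  | @insert a s hj ih =>
      filter_upwards [Lp.coeFn_add (h a) (∑ j ∈ s, h j), ih] with p h1 h2
      rw [Finset.sum_insert hj, Finset.sum_insert hj, h1, Pi.add_apply, h2]

lemma eLpNorm_ker {f g : Ω → ℂ} (hf : AEStronglyMeasurable f μ)
    (hg : AEStronglyMeasurable g μ) :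
    eLpNorm (fun p : Ω × Ω => f p.1 * conj (g p.2)) 2 (μ.prod μ)
      = eLpNorm f 2 μ * eLpNorm g 2 μ := by
  rw [eLpNorm_eq_lintegral_rpow_enorm_toReal two_ne_zero ENNReal.ofNat_ne_top,
    eLpNorm_eq_lintegral_rpow_enorm_toReal two_ne_zero ENNReal.ofNat_ne_top,
    eLpNorm_eq_lintegral_rpow_enorm_toReal two_ne_zero ENNReal.ofNat_ne_top]
  have h1 : ∫⁻ p, ‖f p.1 * conj (g p.2)‖ₑ ^ (ENNReal.toReal 2)
        ∂(μ.prod μ)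
      = (∫⁻ x, ‖f x‖ₑ ^ (ENNReal.toReal 2) ∂μ) *
        ∫⁻ y, ‖g y‖ₑ ^ (ENNReal.toReal 2) ∂μ := by
    rw [← lintegral_prod_mul (hf.enorm.pow_const _) (hg.enorm.pow_const _)]
    congr 1
    ext p
    rw [enorm_mul, RCLike.enorm_conj,
      ENNReal.mul_rpow_of_nonneg _ _ (by positivity)]
  rw [h1, ENNReal.mul_rpow_of_nonneg _ _ (by positivity)]

lemma memL2_ker (f g : Lp ℂ 2 μ) :
    MemLp (fun p : Ω × Ω => (f : Ω → ℂ) p.1 * conj ((g : Ω → ℂ) p.2)) 2 (μ.prod μ) := by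
  have hf := Lp.aestronglyMeasurable f
  have hg := Lp.aestronglyMeasurable g
  have hf1 : AEStronglyMeasurable (fun p : Ω × Ω => (f : Ω → ℂ) p.1) (μ.prod μ) := hf.comp_quasiMeasurePreserving Measure.quasiMeasurePreserving_fst
  refine ⟨hf1.fun_mul ?_, ?_⟩
  · exact (RCLike.continuous_conj.comp_aestronglyMeasurable
      (hg.comp_quasiMeasurePreserving Measure.quasiMeasurePreserving_snd))
  · rw [eLpNorm_ker hf hg]
    exact ENNReal.mul_lt_top (Lp.eLpNorm_lt_top f) (Lp.eLpNorm_lt_top g)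

noncomputable def kerL' (f g : Lp ℂ 2 μ) : Lp ℂ 2 (μ.prod μ) :=
  (memL2_ker f g).toLp _

lemma coeFn_kerL' (f g : Lp ℂ 2 μ) :
    kerL' f g =ᵐ[μ.prod μ] fun p => (f : Ω → ℂ) p.1 * conj ((g : Ω → ℂ) p.2) :=
  (memL2_ker f g).coeFn_toLp

lemma norm_kerL' (f g : Lp ℂ 2 μ) : ‖kerL' f g‖ = ‖f‖ * ‖g‖ := by
  rw [kerL', Lp.norm_toLp, eLpNorm_ker (Lp.aestronglyMeasurable f)
    (Lp.aestronglyMeasurable g), ENNReal.toReal_mul, Lp.norm_def, Lp.norm_def]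

lemma kerL'_add_left (f f' g : Lp ℂ 2 μ) :
    kerL' (f + f') g = kerL' f g + kerL' f' g := by
  apply Lp.ext
  filter_upwards [coeFn_kerL' (f + f') g, coeFn_kerL' f g, coeFn_kerL' f' g,
    Lp.coeFn_add (kerL' f g) (kerL' f' g), ae_fst' (Lp.coeFn_add f f')] with p h1 h2 h3 h4 h5
  rw [h1, h4, Pi.add_apply, h2, h3, h5, Pi.add_apply, add_mul]

lemma kerL'_add_right (f g g' : Lp ℂ 2 μ) :
    kerL' f (g + g') = kerL' f g + kerL' f g' := by
  apply Lp.ext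
  filter_upwards [coeFn_kerL' f (g + g'), coeFn_kerL' f g, coeFn_kerL' f g',
    Lp.coeFn_add (kerL' f g) (kerL' f g'), ae_snd' (Lp.coeFn_add g g')] with p h1 h2 h3 h4 h5
  rw [h1, h4, Pi.add_apply, h2, h3, h5, Pi.add_apply, map_add, mul_add]

lemma kerL'_smul_left (c : ℝ) (f g : Lp ℂ 2 μ) :
    kerL' (c • f) g = c • kerL' f g := by
  apply Lp.ext
  filter_upwards [coeFn_kerL' (c • f) g, coeFn_kerL' f g,
    Lp.coeFn_smul c (kerL' f g), ae_fst' (Lp.coeFn_smul c f)] with p h1 h2 h3 h4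
  rw [h1, h3, Pi.smul_apply, h2, h4, Pi.smul_apply, smul_mul_assoc]

lemma kerL'_smul_right (c : ℝ) (f g : Lp ℂ 2 μ) :
    kerL' f (c • g) = c • kerL' f g := by
  apply Lp.ext
  filter_upwards [coeFn_kerL' f (c • g), coeFn_kerL' f g,
    Lp.coeFn_smul c (kerL' f g), ae_snd' (Lp.coeFn_smul c g)] with p h1 h2 h3 h4
  rw [h1, h3, Pi.smul_apply, h2, h4, Pi.smul_apply]
  simp [Complex.real_smul, map_mul, Complex.conj_ofReal]
  ring

noncomputable def kerCLM : Lp ℂ 2 μ →L[ℝ] Lp ℂ 2 μ →L[ℝ] Lp ℂ 2 (μ.prod μ) :=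
  LinearMap.mkContinuous₂
    (LinearMap.mk₂ ℝ kerL' kerL'_add_left kerL'_smul_left kerL'_add_right kerL'_smul_right)
    1 (fun f g => by rw [LinearMap.mk₂_apply, norm_kerL', one_mul])

lemma kerCLM_apply (f g : Lp ℂ 2 μ) : kerCLM f g = kerL' f g := rfl

end kerAux

/-- compactness (total boundedness of bounded images) of the
covariance forward map induced by a compact observation operator `ι`. -/
theorem statement11
    {Ω : Type*} [MeasurableSpace Ω] (μ : Measure Ω) [SigmaFinite μ]
    {U : Type*} [NormedAddCommGroup U] [NormedSpace ℂ U]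
    (ι : U →L[ℂ] Lp ℂ 2 μ) (hι : IsCompactOperator ι)
    (R : ℝ) (hR : 0 < R) (J : ℕ) (hJ : 1 ≤ J) :
    TotallyBounded { g : Lp ℂ 2 (μ.prod μ) |
      ∃ w : Fin J → U, (∀ j, ‖w j‖ ≤ R) ∧
        ∀ᵐ p ∂(μ.prod μ),
          g p = (1 / (J : ℂ)) * ∑ j, ι (w j) p.1 * conj (ι (w j) p.2) } := by
  classical
  have hι' : IsCompactOperator (⇑(ι.toLinearMap)) := hι
  have hK : IsCompact (closure ((⇑ι) '' Metric.closedBall 0 R)) :=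
    hι'.isCompact_closure_image_closedBall R
  set K : Set (Lp ℂ 2 μ) := closure ((⇑ι) '' Metric.closedBall 0 R) with hKdef
  set F : (Fin J → Lp ℂ 2 μ) → Lp ℂ 2 (μ.prod μ) :=
    fun v => (1 / (J : ℂ)) • ∑ j, kerCLM (v j) (v j) with hFdef
  have hc2 : Continuous fun v : Fin J → Lp ℂ 2 μ => ∑ j, kerCLM (v j) (v j) := by
    apply continuous_finset_sum
    intro j _
    exact (kerCLM (μ := μ)).continuous₂.comp₂ (continuous_apply j) (continuous_apply j)
  have hFcont : Continuous F := by have := hc2.const_smul (1 / (J : ℂ)); exact this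
  have hKpi : IsCompact (Set.univ.pi fun _ : Fin J => K) :=
    isCompact_univ_pi fun _ => hK
  refine TotallyBounded.subset ?_ ((hKpi.image hFcont).totallyBounded)
  rintro g ⟨w, hw, hg⟩
  refine ⟨fun j => ι (w j), fun j _ => subset_closure ⟨w j, ?_, rfl⟩, ?_⟩
  · simpa [Metric.mem_closedBall, dist_zero_right] using hw j
  · symm
    apply Lp.ext
    have hcoe : ∀ j : Fin J, kerCLM (ι (w j)) (ι (w j)) =ᵐ[μ.prod μ]
        fun p : Ω × Ω => (ι (w j) : Ω → ℂ) p.1 * conj ((ι (w j) : Ω → ℂ) p.2) :=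
      fun j => coeFn_kerL' _ _
    have hsum := coeFn_sum' Finset.univ (fun j : Fin J => kerCLM (ι (w j)) (ι (w j)))
    have hsmul := Lp.coeFn_smul (1 / (J : ℂ)) (∑ j, kerCLM (ι (w j)) (ι (w j)))
    filter_upwards [hg, hsmul, hsum, ae_all_iff.2 hcoe] with p h1 h2 h3 h4
    rw [hFdef]
    simp only [h2, Pi.smul_apply, h3, h1, smul_eq_mul]
    congr 1
    exact Finset.sum_congr rfl fun j _ => (h4 j).symm
end

section
/- Let ι : U →L L²(μ, ℂ) be a continuous linear map, let θ, θ̃ ∈ X, and let E, Ẽ : W →L U be two-sided inverses of D(θ) and D(θ̃) with ‖E‖ ≤ M₁ and ‖Ẽ‖ ≤ M₂. Let f₁, …, f_J ∈ W (J ≥ 1) and set u_j := E f_j and v_j := Ẽ f_j. Then the cross-covariance kernel satisfies ‖(1/J) Σ_{j=1}^{J} (ι(v_j − u_j)) ⊗ conj(ι u_j)‖_{L²(μ×μ)} ≤ ‖ι‖² · ‖B‖ · M₁² · M₂ · ((1/J) Σ_{j=1}^{J} ‖f_j‖²_W) · ‖θ − θ̃‖_X. -/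
open MeasureTheory ComplexConjugate
open scoped ENNReal NNReal

lemma tensor_eLpNorm' {Ω : Type*} [MeasurableSpace Ω] (μ : Measure Ω) [SigmaFinite μ]
    (g h : Lp ℂ 2 μ) :
    eLpNorm (fun p : Ω × Ω => g p.1 * conj (h p.2)) 2 (μ.prod μ)
      = eLpNorm (g : Ω → ℂ) 2 μ * eLpNorm (h : Ω → ℂ) 2 μ := by
  have h2 : (2 : ℝ≥0∞).toReal = 2 := by norm_num
  rw [eLpNorm_eq_lintegral_rpow_enorm_toReal (by norm_num) (by norm_num),
      eLpNorm_eq_lintegral_rpow_enorm_toReal (by norm_num) (by norm_num),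
      eLpNorm_eq_lintegral_rpow_enorm_toReal (by norm_num) (by norm_num), h2]
  simp only [enorm_eq_nnnorm]
  have hg : AEMeasurable (fun x => (‖g x‖₊ : ℝ≥0∞) ^ (2:ℝ)) μ :=
    ((Lp.aestronglyMeasurable g).aemeasurable.nnnorm.coe_nnreal_ennreal).pow_const _
  have hh : AEMeasurable (fun x => (‖h x‖₊ : ℝ≥0∞) ^ (2:ℝ)) μ :=
    ((Lp.aestronglyMeasurable h).aemeasurable.nnnorm.coe_nnreal_ennreal).pow_const _
  rw [← ENNReal.mul_rpow_of_nonneg _ _ (by norm_num), ← lintegral_prod_mul hg hh]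
  congr 1
  apply lintegral_congr
  intro p
  rw [← ENNReal.mul_rpow_of_nonneg _ _ (by norm_num)]
  congr 1
  simp [nnnorm_mul]

lemma lp_eLpNorm_eq {Ω : Type*} [MeasurableSpace Ω] {μ : Measure Ω}
    (g : Lp ℂ 2 μ) : eLpNorm (g : Ω → ℂ) 2 μ = ENNReal.ofReal ‖g‖ := by
  rw [Lp.norm_def, ENNReal.ofReal_toReal (Lp.eLpNorm_ne_top g)]

/-- boundedness of the cross-covariance term
`cov(v - u, u)` in `L²(μ × μ)`, linear in `‖θ - θ̃‖`. -/
theorem statement12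
    {Ω : Type*} [MeasurableSpace Ω] (μ : Measure Ω) [SigmaFinite μ]
    {X U W : Type*} [NormedAddCommGroup X] [NormedSpace ℂ X]
    [NormedAddCommGroup U] [NormedSpace ℂ U] [CompleteSpace U]
    [NormedAddCommGroup W] [NormedSpace ℂ W] [CompleteSpace W]
    (K : U →L[ℂ] W) (B : U →L[ℂ] X →L[ℂ] W)
    (D : X → U →L[ℂ] W) (hD : ∀ θ u, D θ u = K u + B u θ)
    (ι : U →L[ℂ] Lp ℂ 2 μ)
    (θ θ' : X) (E E' : W →L[ℂ] U)
    (hE1 : E.comp (D θ) = ContinuousLinearMap.id ℂ U)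
    (hE2 : (D θ).comp E = ContinuousLinearMap.id ℂ W)
    (hE1' : E'.comp (D θ') = ContinuousLinearMap.id ℂ U)
    (hE2' : (D θ').comp E' = ContinuousLinearMap.id ℂ W)
    (M₁ M₂ : ℝ) (hM1 : ‖E‖ ≤ M₁) (hM2 : ‖E'‖ ≤ M₂)
    (J : ℕ) (hJ : 1 ≤ J) (f : Fin J → W)
    (u v : Fin J → U) (hu : ∀ j, u j = E (f j)) (hv : ∀ j, v j = E' (f j)) :
    eLpNorm (fun p : Ω × Ω =>
        (1 / (J : ℂ)) * ∑ j, ι (v j - u j) p.1 * conj (ι (u j) p.2))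
      2 (μ.prod μ)
    ≤ ENNReal.ofReal (‖ι‖ ^ 2 * ‖B‖ * M₁ ^ 2 * M₂
        * ((1 / (J : ℝ)) * ∑ j, ‖f j‖ ^ 2) * ‖θ - θ'‖) := by
  have hM1' : (0:ℝ) ≤ M₁ := le_trans (norm_nonneg _) hM1
  have hM2' : (0:ℝ) ≤ M₂ := le_trans (norm_nonneg _) hM2
  set C : ℝ := ‖ι‖ ^ 2 * ‖B‖ * M₁ ^ 2 * M₂ * ‖θ - θ'‖ with hC
  have hC0 : 0 ≤ C := by positivity
  -- key identity and term bound
  have key : ∀ j, ‖ι (v j - u j)‖ * ‖ι (u j)‖ ≤ C * ‖f j‖ ^ 2 := by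
    intro j
    have huf : ‖u j‖ ≤ M₁ * ‖f j‖ := by
      rw [hu]
      exact le_trans (E.le_opNorm _) (mul_le_mul_of_nonneg_right hM1 (norm_nonneg _))
    have hid : v j - u j = E' ((B (u j)) (θ - θ')) := by
      have h1 : D θ (u j) = f j := by
        rw [hu]
        have := ContinuousLinearMap.ext_iff.mp hE2 (f j)
        simpa using this
      have h2 : E' (D θ' (u j)) = u j := by
        have := ContinuousLinearMap.ext_iff.mp hE1' (u j)
        simpa using this
      have h3 : D θ (u j) - D θ' (u j) = (B (u j)) (θ - θ') := by
        rw [hD, hD, map_sub]; abel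
      calc v j - u j = E' (D θ (u j)) - E' (D θ' (u j)) := by rw [hv, h1, h2]
        _ = E' (D θ (u j) - D θ' (u j)) := (map_sub _ _ _).symm
        _ = E' ((B (u j)) (θ - θ')) := by rw [h3]
    have hvu : ‖v j - u j‖ ≤ M₂ * (‖B‖ * (M₁ * ‖f j‖) * ‖θ - θ'‖) := by
      rw [hid]
      calc ‖E' ((B (u j)) (θ - θ'))‖ ≤ ‖E'‖ * ‖(B (u j)) (θ - θ')‖ := E'.le_opNorm _
        _ ≤ M₂ * (‖B (u j)‖ * ‖θ - θ'‖) :=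
          mul_le_mul hM2 ((B (u j)).le_opNorm _) (norm_nonneg _) hM2'
        _ ≤ M₂ * (‖B‖ * (M₁ * ‖f j‖) * ‖θ - θ'‖) := by
          gcongr
          exact le_trans (B.le_opNorm _) (mul_le_mul_of_nonneg_left huf (norm_nonneg _))
    calc ‖ι (v j - u j)‖ * ‖ι (u j)‖
        ≤ (‖ι‖ * ‖v j - u j‖) * (‖ι‖ * ‖u j‖) :=
          mul_le_mul (ι.le_opNorm _) (ι.le_opNorm _) (norm_nonneg _) (by positivity)
      _ ≤ (‖ι‖ * (M₂ * (‖B‖ * (M₁ * ‖f j‖) * ‖θ - θ'‖))) * (‖ι‖ * (M₁ * ‖f j‖)) := by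
          gcongr
      _ = C * ‖f j‖ ^ 2 := by rw [hC]; ring
  -- measurability of the terms
  have hmeas : ∀ j : Fin J, AEStronglyMeasurable
      (fun p : Ω × Ω => ι (v j - u j) p.1 * conj (ι (u j) p.2)) (μ.prod μ) := by
    intro j
    have h1 : AEStronglyMeasurable (fun p : Ω × Ω => ι (v j - u j) p.1) (μ.prod μ) :=
      (Lp.aestronglyMeasurable (ι (v j - u j))).comp_quasiMeasurePreserving
        Measure.quasiMeasurePreserving_fst
    have h2 : AEStronglyMeasurable (fun p : Ω × Ω => conj (ι (u j) p.2)) (μ.prod μ) :=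
      continuous_star.comp_aestronglyMeasurable
        ((Lp.aestronglyMeasurable (ι (u j))).comp_quasiMeasurePreserving
          Measure.quasiMeasurePreserving_snd)
    exact h1.mul h2
  -- peel off the constant
  have hJ0 : (0:ℝ) < J := by exact_mod_cast hJ
  have hsmul : (fun p : Ω × Ω =>
      (1 / (J : ℂ)) * ∑ j, ι (v j - u j) p.1 * conj (ι (u j) p.2))
      = (1 / (J : ℂ)) • (fun p : Ω × Ω => ∑ j, ι (v j - u j) p.1 * conj (ι (u j) p.2)) := by
    funext p; simp
  rw [hsmul, eLpNorm_const_smul]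
  have hsum : (fun p : Ω × Ω => ∑ j, ι (v j - u j) p.1 * conj (ι (u j) p.2))
      = ∑ j, (fun p : Ω × Ω => ι (v j - u j) p.1 * conj (ι (u j) p.2)) := by
    funext p; simp
  have hsumle : eLpNorm (fun p : Ω × Ω => ∑ j, ι (v j - u j) p.1 * conj (ι (u j) p.2))
      2 (μ.prod μ) ≤ ∑ j, eLpNorm
        (fun p : Ω × Ω => ι (v j - u j) p.1 * conj (ι (u j) p.2)) 2 (μ.prod μ) := by
    rw [hsum]
    exact eLpNorm_sum_le (fun j _ => hmeas j) (by norm_num)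
  have hterm : ∀ j : Fin J, eLpNorm
      (fun p : Ω × Ω => ι (v j - u j) p.1 * conj (ι (u j) p.2)) 2 (μ.prod μ)
      ≤ ENNReal.ofReal (C * ‖f j‖ ^ 2) := by
    intro j
    rw [tensor_eLpNorm' μ (ι (v j - u j)) (ι (u j)), lp_eLpNorm_eq, lp_eLpNorm_eq,
      ← ENNReal.ofReal_mul (norm_nonneg _)]
    exact ENNReal.ofReal_le_ofReal (key j)
  calc (‖(1 / (J : ℂ))‖₊ : ℝ≥0∞) * eLpNorm
        (fun p : Ω × Ω => ∑ j, ι (v j - u j) p.1 * conj (ι (u j) p.2)) 2 (μ.prod μ)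
      ≤ ENNReal.ofReal (1 / (J:ℝ)) * ∑ j, ENNReal.ofReal (C * ‖f j‖ ^ 2) := by
        apply mul_le_mul' _ (le_trans hsumle (Finset.sum_le_sum fun j _ => hterm j))
        rw [← enorm_eq_nnnorm, ← ofReal_norm]
        apply le_of_eq
        congr 1
        simp
    _ = ENNReal.ofReal ((1 / (J:ℝ)) * ∑ j, C * ‖f j‖ ^ 2) := by
        rw [← ENNReal.ofReal_sum_of_nonneg (fun j _ => by positivity),
          ← ENNReal.ofReal_mul (by positivity)]
    _ ≤ ENNReal.ofReal (‖ι‖ ^ 2 * ‖B‖ * M₁ ^ 2 * M₂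
        * ((1 / (J : ℝ)) * ∑ j, ‖f j‖ ^ 2) * ‖θ - θ'‖) := by
        apply ENNReal.ofReal_le_ofReal
        rw [← Finset.mul_sum, hC]
        apply le_of_eq; ring
end

section
/- Let ι : U →L L²(μ, ℂ) be a continuous linear map, let θ, θ̃ ∈ X, and let E, Ẽ : W →L U be two-sided inverses of D(θ) and D(θ̃) with ‖E‖ ≤ M₁ and ‖Ẽ‖ ≤ M₂. Let f₁, …, f_J ∈ W (J ≥ 1) and set u_j := E f_j, v_j := Ẽ f_j, and φ_j := −E((B u_j)(θ − θ̃)). Define the covariance kernels F := (1/J) Σ_j (ι u_j) ⊗ conj(ι u_j) and F̃ := (1/J) Σ_j (ι v_j) ⊗ conj(ι v_j), and the linearization kernel T := (1/J) Σ_j [ (ι u_j) ⊗ conj(ι φ_j) + (ι φ_j) ⊗ conj(ι u_j) ]. Assume (lifted regularity) that there exist Ĉ ≥ 0 and a continuous linear operator G : L²(μ, ℂ) →L L²(μ, ℂ) with ‖G‖ ≤ Ĉ · ‖θ − θ̃‖_X such that G(ι u_j) = ι(E((D(θ) − D(θ̃)) u_j)) and G(ι v_j) = ι(E((D(θ) −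 D(θ̃)) v_j)) for every j. Then the first-order linearization error of the parameter-to-covariance map satisfies the tangential-cone-like bound ‖F − F̃ − T‖_{L²(μ×μ)} ≤ Ĉ · ‖θ − θ̃‖_X · ‖F − F̃‖_{L²(μ×μ)} + ‖ι‖² · ‖B‖² · M₁³ · M₂ · ((1/J) Σ_{j=1}^{J} ‖f_j‖²_W) · ‖θ − θ̃‖²_X. -/
open MeasureTheory ComplexConjugate


namespace S15aux

lemma rpow_two' (x : ENNReal) : x ^ (2:ℝ) = x ^ 2 := by
  rw [show (2:ℝ) = ((2:ℕ):ℝ) by norm_num, ENNReal.rpow_natCast]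

lemma eLpNorm_two {α : Type*} [MeasurableSpace α] (ν : Measure α) (h : α → ℂ) :
    eLpNorm h 2 ν = (∫⁻ z, (‖h z‖₊ : ENNReal)^2 ∂ν) ^ (1/2:ℝ) := by
  rw [eLpNorm_eq_lintegral_rpow_enorm_toReal (by norm_num) (by simp)]
  simp [rpow_two']
  rfl

lemma lpnorm_sq {Ω : Type*} [MeasurableSpace Ω] {μ : Measure Ω} (g : Lp ℂ 2 μ) :
    ∫⁻ y, (‖g y‖₊ : ENNReal)^2 ∂μ = ENNReal.ofReal ‖g‖ ^ 2 := by
  have h2 : ENNReal.ofReal ‖g‖ = eLpNorm (⇑g) 2 μ := by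
    rw [Lp.norm_def, ENNReal.ofReal_toReal (Lp.eLpNorm_ne_top g)]
  rw [h2, eLpNorm_two, ← ENNReal.rpow_natCast _ 2, ← ENNReal.rpow_mul]
  norm_num

lemma coeFn_sum {Ω : Type*} [MeasurableSpace Ω] {μ : Measure Ω} {n : Type*}
    (g : n → Lp ℂ 2 μ) (s : Finset n) :
    ⇑(∑ j ∈ s, g j) =ᵐ[μ] fun y => ∑ j ∈ s, g j y := by
  classical
  induction s using Finset.induction with
  | empty => simp only [Finset.sum_empty]; exact Lp.coeFn_zero ℂ 2 μ
  | insert a s hm ih =>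
    have h3 : (∑ j ∈ insert a s, g j : Lp ℂ 2 μ) = g a + ∑ j ∈ s, g j :=
      Finset.sum_insert hm
    have step : ⇑(g a + ∑ j ∈ s, g j) =ᵐ[μ] fun y => ∑ j ∈ insert a s, g j y := by
      filter_upwards [Lp.coeFn_add (g a) (∑ j ∈ s, g j), ih] with y h1 h2
      rw [Finset.sum_insert hm]
      simp only [h1, Pi.add_apply, h2]
    rw [h3]; exact step

lemma coeFn_comb {Ω : Type*} [MeasurableSpace Ω] {μ : Measure Ω} {n : ℕ}
    (c d : Fin n → ℂ) (A B' : Fin n → Lp ℂ 2 μ) :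
    ⇑(∑ j, (c j • A j - d j • B' j)) =ᵐ[μ]
      fun y => ∑ j, (c j * A j y - d j * B' j y) := by
  have h1 := coeFn_sum (fun j => c j • A j - d j • B' j) Finset.univ
  have h2 : ∀ᵐ y ∂μ, ∀ j,
      (c j • A j - d j • B' j : Lp ℂ 2 μ) y = c j * A j y - d j * B' j y := by
    rw [ae_all_iff]
    intro j
    filter_upwards [Lp.coeFn_sub (c j • A j) (d j • B' j), Lp.coeFn_smul (c j) (A j),
      Lp.coeFn_smul (d j) (B' j)] with y e1 e2 e3
    simp only [e1, Pi.sub_apply, e2, e3, Pi.smul_apply, smul_eq_mul]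
  filter_upwards [h1, h2] with y e1 e2
  rw [e1]
  exact Finset.sum_congr rfl fun j _ => e2 j

lemma inner_sq {Ω : Type*} [MeasurableSpace Ω] {μ : Measure Ω} (J : ℕ)
    (h : Ω → ℂ) (g : Lp ℂ 2 μ)
    (hh : ∀ᵐ y ∂μ, h y = (1/(J:ℂ)) * conj (g y)) :
    ∫⁻ y, ((‖h y‖₊ : ENNReal))^2 ∂μ
      = (ENNReal.ofReal (1/(J:ℝ)))^2 * (ENNReal.ofReal ‖g‖)^2 := by
  have hc : ((‖(1/(J:ℂ))‖₊ : ENNReal)) = ENNReal.ofReal (1/(J:ℝ)) := by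
    rw [← enorm_eq_nnnorm, ← ofReal_norm]
    congr 1
    simp
  have e1 : ∫⁻ y, ((‖h y‖₊ : ENNReal))^2 ∂μ
      = ∫⁻ y, ((‖(1/(J:ℂ))‖₊ : ENNReal))^2 * ((‖g y‖₊ : ENNReal))^2 ∂μ := by
    apply lintegral_congr_ae
    filter_upwards [hh] with y hy
    rw [hy, nnnorm_mul, RCLike.nnnorm_conj]
    push_cast
    rw [mul_pow]
  rw [e1, lintegral_const_mul' _ _ (by exact ENNReal.pow_ne_top ENNReal.coe_ne_top), lpnorm_sq, hc]

end S15aux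

section main
variable {Ω : Type*} [MeasurableSpace Ω] {μ : Measure Ω} [SigmaFinite μ]

lemma aesm_fst (g : Lp ℂ 2 μ) :
    AEStronglyMeasurable (fun p : Ω × Ω => g p.1) (μ.prod μ) :=
  (Lp.aestronglyMeasurable g).comp_quasiMeasurePreserving
    Measure.quasiMeasurePreserving_fst

lemma aesm_snd_conj (h : Lp ℂ 2 μ) :
    AEStronglyMeasurable (fun p : Ω × Ω => conj (h p.2)) (μ.prod μ) := by
  have : AEStronglyMeasurable (fun p : Ω × Ω => h p.2) (μ.prod μ) :=
    (Lp.aestronglyMeasurable h).comp_quasiMeasurePreserving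
      Measure.quasiMeasurePreserving_snd
  exact continuous_star.comp_aestronglyMeasurable this

lemma rank1_aesm (g h : Lp ℂ 2 μ) :
    AEStronglyMeasurable (fun p : Ω × Ω => g p.1 * conj (h p.2)) (μ.prod μ) :=
  (aesm_fst g).mul (aesm_snd_conj h)

lemma rank1_eLpNorm (g h : Lp ℂ 2 μ) :
    eLpNorm (fun p : Ω × Ω => g p.1 * conj (h p.2)) 2 (μ.prod μ)
      = ENNReal.ofReal ‖g‖ * ENNReal.ofReal ‖h‖ := by
  rw [S15aux.eLpNorm_two]
  have h1 : ∀ p : Ω × Ω, ((‖g p.1 * conj (h p.2)‖₊ : ENNReal))^2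
      = (‖g p.1‖₊ : ENNReal)^2 * (‖h p.2‖₊ : ENNReal)^2 := by
    intro p
    rw [nnnorm_mul]
    push_cast
    rw [mul_pow, RCLike.nnnorm_conj]
  simp_rw [h1]
  rw [MeasureTheory.lintegral_prod_mul
    (show AEMeasurable (fun x => (‖g x‖₊ : ENNReal)^2) μ from
      ((Lp.aestronglyMeasurable g).enorm).pow_const 2)
    (show AEMeasurable (fun x => (‖h x‖₊ : ENNReal)^2) μ from
      ((Lp.aestronglyMeasurable h).enorm).pow_const 2),
    S15aux.lpnorm_sq, S15aux.lpnorm_sq, ← mul_pow,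
    ← ENNReal.rpow_natCast _ 2, ← ENNReal.rpow_mul]
  norm_num

lemma lift_fst {h h' : Ω → ℂ} (hh : h =ᵐ[μ] h') :
    (fun p : Ω × Ω => h p.1) =ᵐ[μ.prod μ] fun p => h' p.1 :=
  Measure.quasiMeasurePreserving_fst.ae_eq hh

lemma lift_snd {h h' : Ω → ℂ} (hh : h =ᵐ[μ] h') :
    (fun p : Ω × Ω => h p.2) =ᵐ[μ.prod μ] fun p => h' p.2 :=
  Measure.quasiMeasurePreserving_snd.ae_eq hh

end main
set_option maxHeartbeats 1000000 in
/-- the tangential-cone-like bound for the first-order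
linearization error of the parameter-to-covariance map. -/
theorem statement15
    {Ω : Type*} [MeasurableSpace Ω] (μ : Measure Ω) [SigmaFinite μ]
    {X U W : Type*} [NormedAddCommGroup X] [NormedSpace ℂ X]
    [NormedAddCommGroup U] [NormedSpace ℂ U] [CompleteSpace U]
    [NormedAddCommGroup W] [NormedSpace ℂ W] [CompleteSpace W]
    (K : U →L[ℂ] W) (B : U →L[ℂ] X →L[ℂ] W)
    (D : X → U →L[ℂ] W) (hD : ∀ θ u, D θ u = K u + B u θ)
    (ι : U →L[ℂ] Lp ℂ 2 μ)
    (θ θ' : X) (E E' : W →L[ℂ] U)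
    (hE1 : E.comp (D θ) = ContinuousLinearMap.id ℂ U)
    (hE2 : (D θ).comp E = ContinuousLinearMap.id ℂ W)
    (hE1' : E'.comp (D θ') = ContinuousLinearMap.id ℂ U)
    (hE2' : (D θ').comp E' = ContinuousLinearMap.id ℂ W)
    (M₁ M₂ : ℝ) (hM1 : ‖E‖ ≤ M₁) (hM2 : ‖E'‖ ≤ M₂)
    (J : ℕ) (hJ : 1 ≤ J) (f : Fin J → W)
    (u v φ : Fin J → U)
    (hu : ∀ j, u j = E (f j)) (hv : ∀ j, v j = E' (f j))
    (hφ : ∀ j, φ j = -(E ((B (u j)) (θ - θ'))))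
    (Fk Ftk Tk : Ω × Ω → ℂ)
    (hFk : ∀ p, Fk p = (1 / (J : ℂ)) * ∑ j, ι (u j) p.1 * conj (ι (u j) p.2))
    (hFtk : ∀ p, Ftk p = (1 / (J : ℂ)) * ∑ j, ι (v j) p.1 * conj (ι (v j) p.2))
    (hTk : ∀ p, Tk p = (1 / (J : ℂ)) * ∑ j,
        (ι (u j) p.1 * conj (ι (φ j) p.2) + ι (φ j) p.1 * conj (ι (u j) p.2)))
    (Ch : ℝ) (hCh : 0 ≤ Ch)
    (G : Lp ℂ 2 μ →L[ℂ] Lp ℂ 2 μ)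
    (hGnorm : ‖G‖ ≤ Ch * ‖θ - θ'‖)
    (hGu : ∀ j, G (ι (u j)) = ι (E ((D θ - D θ') (u j))))
    (hGv : ∀ j, G (ι (v j)) = ι (E ((D θ - D θ') (v j)))) :
    eLpNorm (fun p : Ω × Ω => Fk p - Ftk p - Tk p) 2 (μ.prod μ)
      ≤ ENNReal.ofReal (Ch * ‖θ - θ'‖)
          * eLpNorm (fun p : Ω × Ω => Fk p - Ftk p) 2 (μ.prod μ)
        + ENNReal.ofReal (‖ι‖ ^ 2 * ‖B‖ ^ 2 * M₁ ^ 3 * M₂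
            * ((1 / (J : ℝ)) * ∑ j, ‖f j‖ ^ 2) * ‖θ - θ'‖ ^ 2) := by
  classical
  -- basic nonnegativity
  have hM1' : (0:ℝ) ≤ M₁ := le_trans (norm_nonneg E) hM1
  have hM2' : (0:ℝ) ≤ M₂ := le_trans (norm_nonneg E') hM2
  -- basic operator identities
  have hDdiff : ∀ z : U, (D θ - D θ') z = B z (θ - θ') := by
    intro z
    rw [ContinuousLinearMap.sub_apply, hD, hD, map_sub]
    abel
  have hED : ∀ z : U, E (D θ z) = z := by
    intro z
    have := congrArg (fun T : U →L[ℂ] U => T z) hE1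
    simpa using this
  have hDE' : ∀ w : W, D θ' (E' w) = w := by
    intro w
    have := congrArg (fun T : W →L[ℂ] W => T w) hE2'
    simpa using this
  have hEv : ∀ j, E ((D θ - D θ') (v j)) = v j - u j := by
    intro j
    rw [ContinuousLinearMap.sub_apply, map_sub, hED]
    rw [hv j, hDE', ← hu j]
  -- Lp-level identities
  have hφa : ∀ j, ι (φ j) = -(G (ι (u j))) := by
    intro j
    rw [hφ j, map_neg, hGu j, hDdiff]
  have hGb : ∀ j, G (ι (v j)) = -(ι (u j) - ι (v j)) := by
    intro j
    rw [hGv j, hEv j, map_sub, neg_sub]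
  have hgd_el : ∀ j, G (ι (u j)) - G (ι (v j))
      = ι (E (B (u j - v j) (θ - θ'))) := by
    intro j
    rw [hGu j, hGv j, ← map_sub ι, ← map_sub E, ← map_sub (D θ - D θ'), hDdiff]
  -- norm bounds
  have hnu : ∀ j, ‖u j‖ ≤ M₁ * ‖f j‖ := by
    intro j
    rw [hu j]
    exact (E.le_opNorm _).trans (mul_le_mul_of_nonneg_right hM1 (norm_nonneg _))
  have hnv : ∀ j, ‖v j‖ ≤ M₂ * ‖f j‖ := by
    intro j
    rw [hv j]
    exact (E'.le_opNorm _).trans (mul_le_mul_of_nonneg_right hM2 (norm_nonneg _))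
  have hna : ∀ j, ‖ι (u j)‖ ≤ ‖ι‖ * (M₁ * ‖f j‖) :=
    fun j => (ι.le_opNorm _).trans (mul_le_mul_of_nonneg_left (hnu j) (norm_nonneg _))
  have hnw : ∀ j, ‖u j - v j‖ ≤ M₁ * (‖B‖ * (M₂ * ‖f j‖) * ‖θ - θ'‖) := by
    intro j
    calc ‖u j - v j‖ = ‖E ((D θ - D θ') (v j))‖ := by rw [norm_sub_rev, ← hEv j]
      _ ≤ ‖E‖ * ‖(D θ - D θ') (v j)‖ := E.le_opNorm _
      _ = ‖E‖ * ‖B (v j) (θ - θ')‖ := by rw [hDdiff]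
      _ ≤ ‖E‖ * (‖B‖ * ‖v j‖ * ‖θ - θ'‖) :=
          mul_le_mul_of_nonneg_left (B.le_opNorm₂ _ _) (norm_nonneg _)
      _ ≤ M₁ * (‖B‖ * ‖v j‖ * ‖θ - θ'‖) :=
          mul_le_mul_of_nonneg_right hM1 (by positivity)
      _ ≤ M₁ * (‖B‖ * (M₂ * ‖f j‖) * ‖θ - θ'‖) := by
          apply mul_le_mul_of_nonneg_left _ hM1'
          apply mul_le_mul_of_nonneg_right _ (norm_nonneg _)
          exact mul_le_mul_of_nonneg_left (hnv j) B.opNorm_nonneg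
  have hngd : ∀ j, ‖G (ι (u j)) - G (ι (v j))‖
      ≤ ‖ι‖ * (M₁ * (‖B‖ * (M₁ * (‖B‖ * (M₂ * ‖f j‖) * ‖θ - θ'‖)) * ‖θ - θ'‖)) := by
    intro j
    rw [hgd_el j]
    calc ‖ι (E (B (u j - v j) (θ - θ')))‖
        ≤ ‖ι‖ * ‖E (B (u j - v j) (θ - θ'))‖ := ι.le_opNorm _
      _ ≤ ‖ι‖ * (‖E‖ * ‖B (u j - v j) (θ - θ')‖) :=
          mul_le_mul_of_nonneg_left (E.le_opNorm _) (norm_nonneg _)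
      _ ≤ ‖ι‖ * (‖E‖ * (‖B‖ * ‖u j - v j‖ * ‖θ - θ'‖)) := by
          apply mul_le_mul_of_nonneg_left _ (norm_nonneg _)
          exact mul_le_mul_of_nonneg_left (B.le_opNorm₂ _ _) (norm_nonneg _)
      _ ≤ ‖ι‖ * (M₁ * (‖B‖ * ‖u j - v j‖ * ‖θ - θ'‖)) := by
          apply mul_le_mul_of_nonneg_left _ (norm_nonneg _)
          exact mul_le_mul_of_nonneg_right hM1 (by positivity)
      _ ≤ ‖ι‖ * (M₁ * (‖B‖ * (M₁ * (‖B‖ * (M₂ * ‖f j‖) * ‖θ - θ'‖)) * ‖θ - θ'‖)) := by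
          apply mul_le_mul_of_nonneg_left _ (norm_nonneg _)
          apply mul_le_mul_of_nonneg_left _ hM1'
          apply mul_le_mul_of_nonneg_right _ (norm_nonneg _)
          exact mul_le_mul_of_nonneg_left (hnw j) B.opNorm_nonneg
  have hprod : ∀ j, ‖G (ι (u j)) - G (ι (v j))‖ * ‖ι (u j)‖
      ≤ (‖ι‖ ^ 2 * ‖B‖ ^ 2 * M₁ ^ 3 * M₂ * ‖θ - θ'‖ ^ 2) * ‖f j‖ ^ 2 := by
    intro j
    have h := mul_le_mul (hngd j) (hna j) (norm_nonneg _) (by positivity)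
    calc ‖G (ι (u j)) - G (ι (v j))‖ * ‖ι (u j)‖
        ≤ (‖ι‖ * (M₁ * (‖B‖ * (M₁ * (‖B‖ * (M₂ * ‖f j‖) * ‖θ - θ'‖)) * ‖θ - θ'‖)))
            * (‖ι‖ * (M₁ * ‖f j‖)) := h
      _ = (‖ι‖ ^ 2 * ‖B‖ ^ 2 * M₁ ^ 3 * M₂ * ‖θ - θ'‖ ^ 2) * ‖f j‖ ^ 2 := by ring
  -- the two pieces of the decomposition
  set Sf : Ω × Ω → ℂ := fun p => (1/(J:ℂ)) * ∑ j,
    (ι (u j) p.1 * conj ((G (ι (u j))) p.2) - ι (v j) p.1 * conj ((G (ι (v j))) p.2))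
    with hSf
  set Rf : Ω × Ω → ℂ := fun p => (1/(J:ℂ)) * ∑ j,
    ((G (ι (u j)) - G (ι (v j))) p.1 * conj (ι (u j) p.2)) with hRf
  -- a.e. pointwise facts
  have E1 : ∀ j, ⇑(ι (φ j)) =ᵐ[μ] fun y => -((G (ι (u j))) y) := by
    intro j
    rw [hφa j]
    exact Lp.coeFn_neg _
  have E2 : ∀ j, ⇑(G (ι (v j))) =ᵐ[μ] fun y => -(ι (u j) y - ι (v j) y) := by
    intro j
    rw [hGb j]
    filter_upwards [Lp.coeFn_neg (ι (u j) - ι (v j)), Lp.coeFn_sub (ι (u j)) (ι (v j))]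
      with y e1 e2
    simp only [e1, Pi.neg_apply, e2, Pi.sub_apply]
  have E3 : ∀ j, ⇑(G (ι (u j)) - G (ι (v j)))
      =ᵐ[μ] fun y => (G (ι (u j))) y - (G (ι (v j))) y := fun j => Lp.coeFn_sub _ _
  have A1 : ∀ᵐ p ∂(μ.prod μ), ∀ j, ι (φ j) p.1 = -((G (ι (u j))) p.1) :=
    ae_all_iff.mpr fun j => lift_fst (E1 j)
  have A2 : ∀ᵐ p ∂(μ.prod μ), ∀ j, ι (φ j) p.2 = -((G (ι (u j))) p.2) :=
    ae_all_iff.mpr fun j => lift_snd (E1 j)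
  have A3 : ∀ᵐ p ∂(μ.prod μ), ∀ j,
      (G (ι (v j))) p.1 = -(ι (u j) p.1 - ι (v j) p.1) :=
    ae_all_iff.mpr fun j => lift_fst (E2 j)
  have A4 : ∀ᵐ p ∂(μ.prod μ), ∀ j,
      (G (ι (v j))) p.2 = -(ι (u j) p.2 - ι (v j) p.2) :=
    ae_all_iff.mpr fun j => lift_snd (E2 j)
  have A5 : ∀ᵐ p ∂(μ.prod μ), ∀ j,
      (G (ι (u j)) - G (ι (v j))) p.1 = (G (ι (u j))) p.1 - (G (ι (v j))) p.1 :=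
    ae_all_iff.mpr fun j => lift_fst (E3 j)
  have hdec : (fun p : Ω × Ω => Fk p - Ftk p - Tk p) =ᵐ[μ.prod μ]
      fun p => Sf p + Rf p := by
    filter_upwards [A1, A2, A3, A4, A5] with p k1 k2 k3 k4 k5
    rw [hFk, hFtk, hTk, hSf, hRf]
    simp only
    rw [← mul_sub, ← mul_sub, ← mul_add, ← Finset.sum_sub_distrib,
      ← Finset.sum_sub_distrib, ← Finset.sum_add_distrib]
    congr 1
    apply Finset.sum_congr rfl
    intro j _
    rw [k1 j, k2 j, k4 j, k5 j, k3 j]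
    simp only [map_neg, map_sub]
    ring
  -- measurability
  have hSm : AEStronglyMeasurable Sf (μ.prod μ) := by
    apply AEStronglyMeasurable.const_mul
    apply Finset.aestronglyMeasurable_fun_sum
    intro j _
    exact (rank1_aesm _ _).sub (rank1_aesm _ _)
  have hRm : AEStronglyMeasurable Rf (μ.prod μ) := by
    apply AEStronglyMeasurable.const_mul
    apply Finset.aestronglyMeasurable_fun_sum
    intro j _
    exact rank1_aesm _ _
  have hkfun : (fun p : Ω × Ω => Fk p - Ftk p) = fun p => (1/(J:ℂ)) * ∑ j,
      (ι (u j) p.1 * conj (ι (u j) p.2) - ι (v j) p.1 * conj (ι (v j) p.2)) := by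
    funext p
    rw [hFk, hFtk, ← mul_sub, ← Finset.sum_sub_distrib]
  have hkm : AEStronglyMeasurable (fun p : Ω × Ω => Fk p - Ftk p) (μ.prod μ) := by
    rw [hkfun]
    apply AEStronglyMeasurable.const_mul
    apply Finset.aestronglyMeasurable_fun_sum
    intro j _
    exact (rank1_aesm _ _).sub (rank1_aesm _ _)
  -- the remainder bound
  have hRbound : eLpNorm Rf 2 (μ.prod μ)
      ≤ ENNReal.ofReal (‖ι‖ ^ 2 * ‖B‖ ^ 2 * M₁ ^ 3 * M₂
          * ((1 / (J : ℝ)) * ∑ j, ‖f j‖ ^ 2) * ‖θ - θ'‖ ^ 2) := by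
    have h0 : Rf = (1/(J:ℂ)) • (∑ j : Fin J, fun p : Ω × Ω =>
        (G (ι (u j)) - G (ι (v j))) p.1 * conj (ι (u j) p.2)) := by
      funext p
      simp only [hRf, Pi.smul_apply, Finset.sum_apply, smul_eq_mul]
    rw [h0, eLpNorm_const_smul]
    have h1 : eLpNorm (∑ j : Fin J, fun p : Ω × Ω =>
        (G (ι (u j)) - G (ι (v j))) p.1 * conj (ι (u j) p.2)) 2 (μ.prod μ)
        ≤ ∑ j : Fin J, (ENNReal.ofReal
            ((‖ι‖ ^ 2 * ‖B‖ ^ 2 * M₁ ^ 3 * M₂ * ‖θ - θ'‖ ^ 2) * ‖f j‖ ^ 2)) := by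
      refine (eLpNorm_sum_le (fun j _ => rank1_aesm _ _) (by norm_num)).trans ?_
      apply Finset.sum_le_sum
      intro j _
      rw [rank1_eLpNorm, ← ENNReal.ofReal_mul (norm_nonneg _)]
      exact ENNReal.ofReal_le_ofReal (hprod j)
    refine le_trans (mul_le_mul_right h1 _) ?_
    rw [← ENNReal.ofReal_sum_of_nonneg (fun j _ => by positivity)]
    have hc : ((‖(1/(J:ℂ))‖₊ : NNReal) : ENNReal) * (ENNReal.ofReal
        (∑ j, (‖ι‖ ^ 2 * ‖B‖ ^ 2 * M₁ ^ 3 * M₂ * ‖θ - θ'‖ ^ 2) * ‖f j‖ ^ 2))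
        = ENNReal.ofReal ((1/(J:ℝ)) *
          ∑ j, (‖ι‖ ^ 2 * ‖B‖ ^ 2 * M₁ ^ 3 * M₂ * ‖θ - θ'‖ ^ 2) * ‖f j‖ ^ 2) := by
      rw [← enorm_eq_nnnorm, ← ofReal_norm,
        ← ENNReal.ofReal_mul (norm_nonneg _)]
      congr 1
      simp
    rw [enorm_eq_nnnorm, hc]
    apply ENNReal.ofReal_le_ofReal
    rw [← Finset.mul_sum]
    apply le_of_eq
    ring
  -- the principal bound
  have hSbound : eLpNorm Sf 2 (μ.prod μ)
      ≤ ENNReal.ofReal (Ch * ‖θ - θ'‖)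
          * eLpNorm (fun p : Ω × Ω => Fk p - Ftk p) 2 (μ.prod μ) := by
    set P : Ω → Lp ℂ 2 μ := fun x => ∑ j,
      (conj (ι (u j) x) • ι (u j) - conj (ι (v j) x) • ι (v j)) with hP
    have c1 : ∀ x, ∀ᵐ y ∂μ, (P x) y
        = ∑ j, (conj (ι (u j) x) * ι (u j) y - conj (ι (v j) x) * ι (v j) y) :=
      fun x => S15aux.coeFn_comb _ _ _ _
    have hGP : ∀ x, G (P x) = ∑ j,
        (conj (ι (u j) x) • G (ι (u j)) - conj (ι (v j) x) • G (ι (v j))) := by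
      intro x
      rw [hP, map_sum]
      refine Finset.sum_congr rfl fun j _ => ?_
      rw [map_sub, ContinuousLinearMap.map_smul, ContinuousLinearMap.map_smul]
    have c2 : ∀ x, ∀ᵐ y ∂μ, (G (P x)) y
        = ∑ j, (conj (ι (u j) x) * (G (ι (u j))) y
            - conj (ι (v j) x) * (G (ι (v j))) y) := by
      intro x
      rw [hGP x]
      exact S15aux.coeFn_comb _ _ _ _
    have key1 : ∀ x, ∀ᵐ y ∂μ, Fk (x, y) - Ftk (x, y)
        = (1/(J:ℂ)) * conj ((P x) y) := by
      intro x
      filter_upwards [c1 x] with y hy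
      rw [hFk, hFtk, ← mul_sub, ← Finset.sum_sub_distrib, hy, map_sum]
      congr 1
      apply Finset.sum_congr rfl
      intro j _
      simp only [map_sub, map_mul, Complex.conj_conj]
    have key2 : ∀ x, ∀ᵐ y ∂μ, Sf (x, y) = (1/(J:ℂ)) * conj ((G (P x)) y) := by
      intro x
      filter_upwards [c2 x] with y hy
      rw [hSf]
      simp only
      rw [hy, map_sum]
      congr 1
      apply Finset.sum_congr rfl
      intro j _
      simp only [map_sub, map_mul, Complex.conj_conj]
    have hGPn : ∀ x, ‖G (P x)‖ ≤ (Ch * ‖θ - θ'‖) * ‖P x‖ :=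
      fun x => (G.le_opNorm _).trans
        (mul_le_mul_of_nonneg_right hGnorm (norm_nonneg _))
    -- Fubini on both sides
    have hSmm : AEMeasurable (fun p : Ω × Ω => ((‖Sf p‖₊ : ENNReal))^2) (μ.prod μ) :=
      hSm.enorm.pow_const 2
    have hkmm : AEMeasurable (fun p : Ω × Ω =>
        ((‖Fk p - Ftk p‖₊ : ENNReal))^2) (μ.prod μ) := hkm.enorm.pow_const 2
    have IS : ∫⁻ p, ((‖Sf p‖₊ : ENNReal))^2 ∂(μ.prod μ)
        ≤ (ENNReal.ofReal (Ch * ‖θ - θ'‖))^2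
            * ∫⁻ p, ((‖Fk p - Ftk p‖₊ : ENNReal))^2 ∂(μ.prod μ) := by
      rw [MeasureTheory.lintegral_prod _ hSmm, MeasureTheory.lintegral_prod _ hkmm]
      have step1 : ∫⁻ x, ∫⁻ y, ((‖Sf (x, y)‖₊ : ENNReal))^2 ∂μ ∂μ
          = ∫⁻ x, (ENNReal.ofReal (1/(J:ℝ)))^2
              * (ENNReal.ofReal ‖G (P x)‖)^2 ∂μ :=
        lintegral_congr fun x => S15aux.inner_sq J _ _ (key2 x)
      have step2 : ∫⁻ x, ∫⁻ y, ((‖Fk (x, y) - Ftk (x, y)‖₊ : ENNReal))^2 ∂μ ∂μ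
          = ∫⁻ x, (ENNReal.ofReal (1/(J:ℝ)))^2
              * (ENNReal.ofReal ‖P x‖)^2 ∂μ :=
        lintegral_congr fun x => S15aux.inner_sq J _ _ (key1 x)
      rw [step1, step2]
      rw [← lintegral_const_mul' _ _ (by
        exact ENNReal.pow_ne_top ENNReal.ofReal_ne_top)]
      apply lintegral_mono
      intro x
      calc (ENNReal.ofReal (1/(J:ℝ)))^2 * (ENNReal.ofReal ‖G (P x)‖)^2
          ≤ (ENNReal.ofReal (1/(J:ℝ)))^2
              * ((ENNReal.ofReal (Ch * ‖θ - θ'‖)) * ENNReal.ofReal ‖P x‖)^2 := by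
            apply mul_le_mul_right
            apply pow_le_pow_left'
            rw [← ENNReal.ofReal_mul (by positivity)]
            exact ENNReal.ofReal_le_ofReal (hGPn x)
        _ = (ENNReal.ofReal (Ch * ‖θ - θ'‖))^2
              * ((ENNReal.ofReal (1/(J:ℝ)))^2 * (ENNReal.ofReal ‖P x‖)^2) := by
            rw [mul_pow]; ring
    rw [S15aux.eLpNorm_two, S15aux.eLpNorm_two]
    calc (∫⁻ p, ((‖Sf p‖₊ : ENNReal))^2 ∂(μ.prod μ)) ^ (1/2:ℝ)
        ≤ ((ENNReal.ofReal (Ch * ‖θ - θ'‖))^2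
            * ∫⁻ p, ((‖Fk p - Ftk p‖₊ : ENNReal))^2 ∂(μ.prod μ)) ^ (1/2:ℝ) :=
          ENNReal.rpow_le_rpow IS (by norm_num)
      _ = ENNReal.ofReal (Ch * ‖θ - θ'‖)
            * (∫⁻ p, ((‖Fk p - Ftk p‖₊ : ENNReal))^2 ∂(μ.prod μ)) ^ (1/2:ℝ) := by
          rw [ENNReal.mul_rpow_of_nonneg _ _ (by norm_num), ← S15aux.rpow_two',
            ← ENNReal.rpow_mul]
          norm_num
  -- put the pieces together
  calc eLpNorm (fun p : Ω × Ω => Fk p - Ftk p - Tk p) 2 (μ.prod μ)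
      = eLpNorm (Sf + Rf) 2 (μ.prod μ) := eLpNorm_congr_ae hdec
    _ ≤ eLpNorm Sf 2 (μ.prod μ) + eLpNorm Rf 2 (μ.prod μ) :=
        eLpNorm_add_le hSm hRm (by norm_num)
    _ ≤ _ := add_le_add hSbound hRbound
end
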